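/- For every modulus κ with 0 < κ < 1, the function rn : ℝ → ℝ is twice differentiable and satisfies the second-order differential equation rn''(u) = 2·rn(u)³ − rn(u) for all real u. -/

import Mathlib

open Real
open scoped NNReal ENNReal

/-- The Gauss hypergeometric series `F(a, b; c; x)` with real parameters. -/
noncomputable def hyperF (a b c x : ℝ) : ℝ :=
  ∑' n : ℕ, (Polynomial.eval a (ascPochhammer ℝ n) * Polynomial.eval b (ascPochhammer ℝ n) /
      (Polynomial.eval c (ascPochhammer ℝ n) * (Nat.factorial n : ℝ))) * x ^ n

/-- `G κ T = ∫₀^T F(1/4, 3/4; 1/2; κ² sin² t) dt`. -/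
noncomputable def G (κ T : ℝ) : ℝ :=
  ∫ t in (0:ℝ)..T, hyperF (1/4) (3/4) (1/2) (κ ^ 2 * Real.sin t ^ 2)

/-- The complete integral `K = G κ (π/2)`. -/
noncomputable def K (κ : ℝ) : ℝ := G κ (Real.pi / 2)

/-- The auxiliary function `ψ = arcsin (κ sin φ)`. -/
noncomputable def psi (κ : ℝ) (φ : ℝ → ℝ) (u : ℝ) : ℝ :=
  Real.arcsin (κ * Real.sin (φ u))

/-- The root function `rn = sin (ψ/2)`. -/
noncomputable def rn (κ : ℝ) (φ : ℝ → ℝ) (u : ℝ) : ℝ :=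
  Real.sin (psi κ φ u / 2)

lemma ascPochhammer_eval_pos {x : ℝ} (hx : 0 < x) (n : ℕ) :
    0 < (ascPochhammer ℝ n).eval x := by
  induction n with
  | zero => simp
  | succ n ih =>
      rw [ascPochhammer_succ_eval]
      positivity

lemma centralBinom_key (n : ℕ) :
    (Nat.centralBinom (2*n+2) : ℝ) * ((2*n+1) * (2*n+2))
      = 4*(4*n+1)*(4*n+3) * Nat.centralBinom (2*n) := by
  have h2 := congrArg (Nat.cast : ℕ → ℝ) (Nat.succ_mul_centralBinom_succ (2*n))
  have h3 := congrArg (Nat.cast : ℕ → ℝ) (Nat.succ_mul_centralBinom_succ (2*n+1))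
  push_cast at h2 h3 ⊢
  linear_combination (2*(n:ℝ)+1)*h3 + 2*(4*(n:ℝ)+3)*h2

lemma hyperF_coeff (n : ℕ) :
    Polynomial.eval (1/4:ℝ) (ascPochhammer ℝ n) * Polynomial.eval (3/4:ℝ) (ascPochhammer ℝ n) /
      (Polynomial.eval (1/2:ℝ) (ascPochhammer ℝ n) * (Nat.factorial n : ℝ))
      = (Nat.centralBinom (2*n) : ℝ) / 16 ^ n := by
  induction n with
  | zero => simp [Nat.centralBinom]
  | succ n ih =>
      have hP1 := ascPochhammer_eval_pos (x := (1/4:ℝ)) (by norm_num) n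
      have hP2 := ascPochhammer_eval_pos (x := (1/2:ℝ)) (by norm_num) n
      have hP3 := ascPochhammer_eval_pos (x := (3/4:ℝ)) (by norm_num) n
      have hfac : (0:ℝ) < (Nat.factorial n : ℝ) := by positivity
      have key := centralBinom_key n
      have h2n : 2*(n+1) = 2*n+2 := by ring
      rw [h2n]
      rw [ascPochhammer_succ_eval, ascPochhammer_succ_eval, ascPochhammer_succ_eval,
        Nat.factorial_succ]
      have ih' : Polynomial.eval (1/4:ℝ) (ascPochhammer ℝ n) *
          Polynomial.eval (3/4:ℝ) (ascPochhammer ℝ n) * 16^n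
          = (Nat.centralBinom (2*n) : ℝ) *
            (Polynomial.eval (1/2:ℝ) (ascPochhammer ℝ n) * (Nat.factorial n : ℝ)) := by
        field_simp at ih
        linarith [ih]
      push_cast
      rw [div_eq_div_iff (by positivity) (by positivity)]
      linear_combination (16*((1:ℝ)/4+n)*(3/4+n))*ih' - (Polynomial.eval (1/2:ℝ) (ascPochhammer ℝ n) * (Nat.factorial n:ℝ)/4) * key

noncomputable def hC : ℂ → ℂ := fun z => (1 - 4*z) ^ (-(1/2) : ℂ)

lemma cb_fac_succ (n : ℕ) :
    Nat.centralBinom (n+1) * (n+1).factorial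
      = 2*(2*n+1) * (Nat.centralBinom n * n.factorial) := by
  rw [Nat.factorial_succ, ← mul_assoc, mul_comm (Nat.centralBinom (n+1)) (n+1),
    Nat.succ_mul_centralBinom_succ]
  ring

lemma hasDerivAt_one_sub_four (z : ℂ) : HasDerivAt (fun w : ℂ => 1 - 4*w) (-4) z := by
  simpa using ((hasDerivAt_id z).const_mul (4:ℂ)).const_sub 1

lemma iteratedDeriv_hC (n : ℕ) : ∀ z : ℂ, 0 < (1 - 4*z).re →
    iteratedDeriv n hC z
      = (Nat.centralBinom n * n.factorial : ℕ) * (1 - 4*z) ^ (-(1/2:ℂ) - n) := by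
  induction n with
  | zero =>
      intro z hz
      simp [iteratedDeriv_zero, hC, Nat.centralBinom]
  | succ n ih =>
      intro z hz
      have hU : IsOpen {w : ℂ | 0 < (1 - 4*w).re} :=
        isOpen_lt continuous_const (Complex.continuous_re.comp (by continuity))
      have hev : iteratedDeriv n hC =ᶠ[nhds z]
          fun w => (Nat.centralBinom n * n.factorial : ℕ) * (1 - 4*w) ^ (-(1/2:ℂ) - n) :=
        Filter.eventually_of_mem (hU.mem_nhds hz) (fun w hw => ih w hw)
      rw [iteratedDeriv_succ, hev.deriv_eq]
      have hslit : (1 - 4*z) ∈ Complex.slitPlane := Complex.mem_slitPlane_iff.2 (Or.inl hz)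
      have hd := (HasDerivAt.cpow_const (c := -(1/2:ℂ) - n)
          (hasDerivAt_one_sub_four z) hslit).const_mul
          (((Nat.centralBinom n * n.factorial : ℕ)) : ℂ)
      rw [hd.deriv]
      have hexp : (-(1/2:ℂ) - n) - 1 = -(1/2:ℂ) - ((n:ℕ)+1 : ℕ) := by push_cast; ring
      rw [← hexp]
      have hc := congrArg (Nat.cast : ℕ → ℂ) (cb_fac_succ n)
      push_cast at hc ⊢
      rw [hc]
      ring

lemma hasSum_centralBinom_complex {y : ℂ} (hy : ‖y‖ < 1/4) :
    HasSum (fun n => (Nat.centralBinom n : ℂ) * y ^ n) ((1 - 4*y) ^ (-(1/2):ℂ)) := by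
  have hre : ∀ z : ℂ, ‖z‖ < 1/4 → 0 < (1 - 4*z).re := by
    intro z hz
    have h1 : (1 - 4*z).re = 1 - 4*z.re := by simp
    have h2 : z.re ≤ |z.re| := le_abs_self _
    have h3 : |z.re| ≤ ‖z‖ := Complex.abs_re_le_norm z
    rw [h1]; linarith
  set r : ℝ≥0 := ‖y‖₊ / 2 + 1/8 with hrdef
  have hr1 : (r:ℝ) = ‖y‖/2 + 1/8 := by
    rw [hrdef]
    push_cast
    simp
  have hrlt : (r:ℝ) < 1/4 := by rw [hr1]; linarith
  have hylt : ‖y‖ < (r:ℝ) := by rw [hr1]; linarith [norm_nonneg y]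
  have hdiff : DifferentiableOn ℂ hC (Metric.closedBall (0:ℂ) (r : ℝ)) := by
    intro z hz
    simp only [Metric.mem_closedBall, dist_zero_right] at hz
    have hz' : ‖z‖ < 1/4 := lt_of_le_of_lt hz hrlt
    have hslit : (1 - 4*z) ∈ Complex.slitPlane :=
      Complex.mem_slitPlane_iff.2 (Or.inl (hre z hz'))
    exact ((hasDerivAt_one_sub_four z).cpow_const hslit).differentiableAt.differentiableWithinAt
  have hrpos : (0:ℝ≥0) < r := by
    rw [← NNReal.coe_lt_coe, hr1]
    positivity
  have hps := hdiff.hasFPowerSeriesOnBall hrpos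
  have hmem : y ∈ Metric.eball (0:ℂ) ((r : ℝ≥0) : ℝ≥0∞) := by
    rw [Metric.emetric_ball_nnreal]
    simpa using hylt
  have hsum := hps.hasSum_iteratedFDeriv hmem
  have hval : hC (0 + y) = (1 - 4*y) ^ (-(1/2):ℂ) := by rw [zero_add]; rfl
  rw [hval] at hsum
  refine hsum.congr_fun fun n => ?_
  have h1 : iteratedFDeriv ℂ n hC 0 (fun _ => y) = y^n • iteratedDeriv n hC 0 := by
    rw [iteratedDeriv_eq_iteratedFDeriv]
    have h2 : (fun _ : Fin n => y) = fun _ : Fin n => y • (1:ℂ) := by funext i; simp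
    rw [h2, ContinuousMultilinearMap.map_smul_univ]
    simp
  have h3 : iteratedDeriv n hC 0 = (Nat.centralBinom n * n.factorial : ℕ) := by
    rw [iteratedDeriv_hC n 0 (by norm_num)]
    norm_num
  rw [h1, h3]
  have hfac : ((n.factorial : ℂ)) ≠ 0 := Nat.cast_ne_zero.2 n.factorial_ne_zero
  push_cast
  simp only [smul_eq_mul]
  rw [eq_comm, inv_mul_eq_iff_eq_mul₀ hfac]
  ring

lemma hasSum_centralBinom_real {t : ℝ} (ht : |t| < 1/4) :
    HasSum (fun n => (Nat.centralBinom n : ℝ) * t ^ n) ((1 - 4*t) ^ (-(1/2) : ℝ)) := by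
  have hc := hasSum_centralBinom_complex (y := (t:ℂ)) (by simpa using ht)
  have hr := Complex.reCLM.hasSum hc
  have h0 : (0:ℝ) < 1 - 4*t := by
    have := abs_lt.1 ht
    linarith
  have hb : ((1:ℂ) - 4*(t:ℂ)) = (((1 - 4*t : ℝ)) : ℂ) := by push_cast; ring
  have he : (-(1/2) : ℂ) = ((-(1/2) : ℝ) : ℂ) := by norm_num
  have hv : ((1:ℂ) - 4*(t:ℂ)) ^ (-(1/2):ℂ) = (((1 - 4*t) ^ (-(1/2):ℝ) : ℝ) : ℂ) := by
    rw [hb, he, ← Complex.ofReal_cpow h0.le]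
  rw [hv] at hr
  refine hr.congr_fun fun n => ?_
  rw [show ((Nat.centralBinom n : ℂ) * (t:ℂ)^n) = (((Nat.centralBinom n : ℝ) * t^n : ℝ) : ℂ) by push_cast; ring,
    Complex.reCLM_apply, Complex.ofReal_re]


lemma rpow_neg_half (a : ℝ) (ha : 0 ≤ a) : a ^ (-(1/2):ℝ) = (Real.sqrt a)⁻¹ := by
  rw [Real.rpow_neg ha, Real.sqrt_eq_rpow]

lemma hasSum_hyperF {x : ℝ} (hx0 : 0 ≤ x) (hx1 : x < 1) :
    HasSum (fun n : ℕ =>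
      (Polynomial.eval (1/4:ℝ) (ascPochhammer ℝ n) * Polynomial.eval (3/4:ℝ) (ascPochhammer ℝ n) /
        (Polynomial.eval (1/2:ℝ) (ascPochhammer ℝ n) * (Nat.factorial n : ℝ))) * x ^ n)
      (((Real.sqrt (1 - Real.sqrt x))⁻¹ + (Real.sqrt (1 + Real.sqrt x))⁻¹) / 2) := by
  set t : ℝ := Real.sqrt x / 4 with htdef
  have hsx0 : 0 ≤ Real.sqrt x := Real.sqrt_nonneg x
  have hsx1 : Real.sqrt x < 1 := by
    rw [show (1:ℝ) = Real.sqrt 1 by simp]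
    exact Real.sqrt_lt_sqrt hx0 (by linarith)
  have ht0 : 0 ≤ t := by positivity
  have ht : |t| < 1/4 := by rw [abs_of_nonneg ht0]; rw [htdef]; linarith
  have ht' : |(-t)| < 1/4 := by rwa [abs_neg]
  have h1 := hasSum_centralBinom_real ht
  have h2 := hasSum_centralBinom_real ht'
  have hA : (1 - 4*t) = 1 - Real.sqrt x := by rw [htdef]; ring
  have hB : (1 - 4*(-t)) = 1 + Real.sqrt x := by rw [htdef]; ring
  rw [hA, rpow_neg_half _ (by linarith)] at h1
  rw [hB, rpow_neg_half _ (by linarith)] at h2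
  have h3 := (h1.add h2).div_const 2
  have hinj : Function.Injective (fun n : ℕ => 2*n) := fun a b h => by dsimp at h; omega
  have hvanish : ∀ m ∉ Set.range (fun n : ℕ => 2*n),
      ((Nat.centralBinom m : ℝ) * t^m + (Nat.centralBinom m : ℝ) * (-t)^m) / 2 = 0 := by
    intro m hm
    rcases Nat.even_or_odd m with he | ho
    · obtain ⟨k, hk⟩ := he
      exact absurd (⟨k, by dsimp; omega⟩ : m ∈ Set.range (fun n : ℕ => 2*n)) hm
    · rw [ho.neg_pow]
      ring
  have h4 := (hinj.hasSum_iff hvanish).2 h3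
  refine h4.congr_fun fun n => ?_
  have he : Even (2*n) := ⟨n, by ring⟩
  have ht2 : t^(2*n) = (x/16)^n := by
    rw [pow_mul, htdef, div_pow, Real.sq_sqrt hx0]
    norm_num
  simp only [Function.comp]
  rw [he.neg_pow, hyperF_coeff n]
  rw [ht2, div_pow]
  field_simp
  ring

noncomputable def gg (κ t : ℝ) : ℝ :=
  ((Real.sqrt (1 - κ * Real.sin t))⁻¹ + (Real.sqrt (1 + κ * Real.sin t))⁻¹) / 2

section kappa
variable {κ : ℝ} (hκ₀ : 0 < κ) (hκ₁ : κ < 1)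

include hκ₀ hκ₁

lemma one_sub_pos (t : ℝ) : 0 < 1 - κ * Real.sin t := by
  nlinarith [Real.neg_one_le_sin t, Real.sin_le_one t]

lemma one_add_pos (t : ℝ) : 0 < 1 + κ * Real.sin t := by
  nlinarith [Real.neg_one_le_sin t, Real.sin_le_one t]

lemma gg_pos (t : ℝ) : 0 < gg κ t := by
  have h1 := one_sub_pos hκ₀ hκ₁ t
  have h2 := one_add_pos hκ₀ hκ₁ t
  unfold gg
  positivity

lemma gg_cont : Continuous (gg κ) := by
  unfold gg
  refine Continuous.div_const (Continuous.add ?_ ?_) 2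
  · exact (Real.continuous_sqrt.comp (by continuity)).inv₀
      fun t => (Real.sqrt_pos.2 (one_sub_pos hκ₀ hκ₁ t)).ne'
  · exact (Real.continuous_sqrt.comp (by continuity)).inv₀
      fun t => (Real.sqrt_pos.2 (one_add_pos hκ₀ hκ₁ t)).ne'

lemma hyperF_sin (u : ℝ) :
    hyperF (1/4) (3/4) (1/2) (κ^2 * Real.sin u^2) = gg κ u := by
  have hx0 : 0 ≤ κ^2 * Real.sin u^2 := by positivity
  have hx1 : κ^2 * Real.sin u^2 < 1 := by
    nlinarith [Real.sin_sq_le_one u, sq_nonneg (Real.sin u)]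
  have hs : Real.sqrt (κ^2 * Real.sin u^2) = |κ * Real.sin u| := by
    rw [show κ^2 * Real.sin u^2 = (κ * Real.sin u)^2 by ring, Real.sqrt_sq_eq_abs]
  have := (hasSum_hyperF hx0 hx1).tsum_eq
  rw [hyperF, this, hs]
  rcases abs_cases (κ * Real.sin u) with ⟨h, _⟩ | ⟨h, _⟩
  · rw [h]; rfl
  · rw [h, gg, show (1:ℝ) - -(κ*Real.sin u) = 1 + κ*Real.sin u by ring,
      show (1:ℝ) + -(κ*Real.sin u) = 1 - κ*Real.sin u by ring, add_comm]

end kappa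

section kappa2
variable {κ : ℝ} (hκ₀ : 0 < κ) (hκ₁ : κ < 1)
include hκ₀ hκ₁

lemma G_eq : G κ = fun T => ∫ t in (0:ℝ)..T, gg κ t := by
  funext T
  unfold G
  simp only [hyperF_sin hκ₀ hκ₁]

lemma hasDerivAt_G (T : ℝ) : HasDerivAt (G κ) (gg κ T) T := by
  rw [G_eq hκ₀ hκ₁]
  exact intervalIntegral.integral_hasDerivAt_right
    ((gg_cont hκ₀ hκ₁).intervalIntegrable 0 T)
    ((gg_cont hκ₀ hκ₁).stronglyMeasurableAtFilter _ _)
    (gg_cont hκ₀ hκ₁).continuousAt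

lemma G_strictMono : StrictMono (G κ) := by
  apply strictMono_of_deriv_pos
  intro x
  rw [(hasDerivAt_G hκ₀ hκ₁ x).deriv]
  exact gg_pos hκ₀ hκ₁ x

lemma phi_hasDerivAt {φ : ℝ → ℝ} (hφ₂ : Function.RightInverse φ (G κ)) (u : ℝ) :
    HasDerivAt φ (gg κ (φ u))⁻¹ u := by
  have hsurj : Function.Surjective (G κ) := hφ₂.surjective
  let e := StrictMono.orderIsoOfSurjective (G κ) (G_strictMono hκ₀ hκ₁) hsurj
  have hφe : φ = ⇑e.symm := by
    funext v
    apply e.injective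
    have h1 : e (φ v) = G κ (φ v) := rfl
    rw [h1, hφ₂ v, OrderIso.apply_symm_apply]
  have hcont : Continuous φ := by
    rw [hφe]
    exact OrderIso.continuous e.symm
  exact HasDerivAt.of_local_left_inverse hcont.continuousAt
    (hasDerivAt_G hκ₀ hκ₁ (φ u)) (gg_pos hκ₀ hκ₁ (φ u)).ne'
    (Filter.Eventually.of_forall hφ₂)

end kappa2

lemma sqrt_half_angle {s : ℝ} (hs : |s| < 1) :
    ((Real.sqrt (1 - s))⁻¹ + (Real.sqrt (1 + s))⁻¹) / 2
      = Real.cos (Real.arcsin s / 2) / Real.sqrt (1 - s^2) := by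
  obtain ⟨hs1, hs2⟩ := abs_lt.1 hs
  have h1 : (0:ℝ) < 1 - s := by linarith
  have h2 : (0:ℝ) < 1 + s := by linarith
  have h3 : (0:ℝ) < 1 - s^2 := by nlinarith
  set a := Real.sqrt (1 - s) with ha
  set b := Real.sqrt (1 + s) with hb
  have ha0 : 0 < a := Real.sqrt_pos.2 h1
  have hb0 : 0 < b := Real.sqrt_pos.2 h2
  have ha2 : a^2 = 1 - s := Real.sq_sqrt h1.le
  have hb2 : b^2 = 1 + s := Real.sq_sqrt h2.le
  have hab : a * b = Real.sqrt (1 - s^2) := by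
    rw [ha, hb, ← Real.sqrt_mul h1.le]
    ring_nf
  have habpos : 0 < Real.sqrt (1 - s^2) := Real.sqrt_pos.2 h3
  have hcos : Real.cos (Real.arcsin s / 2)
      = Real.sqrt ((1 + Real.sqrt (1 - s^2)) / 2) := by
    rw [Real.cos_half ?hl ?hr, Real.cos_arcsin, sq]
    case hl =>
      have := Real.neg_pi_div_two_le_arcsin s
      have := Real.pi_pos
      linarith
    case hr =>
      have := Real.arcsin_le_pi_div_two s
      have := Real.pi_pos
      linarith
  have hkey : Real.sqrt ((1 + Real.sqrt (1 - s^2)) / 2) = (a + b) / 2 := by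
    rw [show (1 + Real.sqrt (1 - s^2)) / 2 = ((a + b)/2)^2 by
      rw [← hab]; nlinarith [ha2, hb2]]
    exact Real.sqrt_sq (by positivity)
  rw [hcos, hkey, ← hab]
  field_simp
  ring


theorem stmt11 (κ : ℝ) (hκ₀ : 0 < κ) (hκ₁ : κ < 1)
    (φ : ℝ → ℝ) (hφ₁ : Function.LeftInverse φ (G κ))
    (hφ₂ : Function.RightInverse φ (G κ)) :
    Differentiable ℝ (rn κ φ) ∧ Differentiable ℝ (deriv (rn κ φ)) ∧
      ∀ u : ℝ, deriv (deriv (rn κ φ)) u = 2 * (rn κ φ u) ^ 3 - rn κ φ u := by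
  -- basic bounds
  have habs : ∀ u : ℝ, |κ * Real.sin (φ u)| < 1 := by
    intro u
    rw [abs_mul, abs_of_pos hκ₀]
    calc κ * |Real.sin (φ u)| ≤ κ * 1 :=
          mul_le_mul_of_nonneg_left (Real.abs_sin_le_one _) hκ₀.le
      _ < 1 := by linarith
  -- notation-level facts at each point
  have key : ∀ u : ℝ,
      gg κ (φ u) = Real.cos (psi κ φ u / 2) / Real.sqrt (1 - (κ * Real.sin (φ u))^2) := by
    intro u
    have := sqrt_half_angle (habs u)
    exact this
  have hcoshalf_pos : ∀ u : ℝ, 0 < Real.cos (psi κ φ u / 2) := by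
    intro u
    apply Real.cos_pos_of_mem_Ioo
    have h1 := Real.neg_pi_div_two_le_arcsin (κ * Real.sin (φ u))
    have h2 := Real.arcsin_le_pi_div_two (κ * Real.sin (φ u))
    have hp := Real.pi_pos
    unfold psi
    constructor
    · show -(Real.pi/2) < _ / 2
      linarith
    · show _ / 2 < Real.pi/2
      linarith
  have hsq_pos : ∀ u : ℝ, 0 < Real.sqrt (1 - (κ * Real.sin (φ u))^2) := by
    intro u
    apply Real.sqrt_pos.2
    have := habs u
    nlinarith [abs_lt.1 (habs u), abs_nonneg (κ * Real.sin (φ u)), sq_abs (κ * Real.sin (φ u))]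
  -- first derivative
  have step1 : ∀ u : ℝ, HasDerivAt (rn κ φ) (κ * Real.cos (φ u) / 2) u := by
    intro u
    have hφd := phi_hasDerivAt hκ₀ hκ₁ hφ₂ u
    have hsin : HasDerivAt (fun v => κ * Real.sin (φ v))
        (κ * (Real.cos (φ u) * (gg κ (φ u))⁻¹)) u :=
      (((Real.hasDerivAt_sin (φ u)).comp u hφd)).const_mul κ
    have h1 : κ * Real.sin (φ u) ≠ -1 := by
      have hh := habs u; intro h; rw [h] at hh; norm_num at hh
    have h2 : κ * Real.sin (φ u) ≠ 1 := by
      have hh := habs u; intro h; rw [h] at hh; norm_num at hh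
    have harc := Real.hasDerivAt_arcsin h1 h2
    have hψ : HasDerivAt (psi κ φ)
        (1 / Real.sqrt (1 - (κ * Real.sin (φ u))^2)
          * (κ * (Real.cos (φ u) * (gg κ (φ u))⁻¹))) u := harc.comp u hsin
    have hrn : HasDerivAt (rn κ φ)
        (Real.cos (psi κ φ u / 2) *
          ((1 / Real.sqrt (1 - (κ * Real.sin (φ u))^2)
            * (κ * (Real.cos (φ u) * (gg κ (φ u))⁻¹))) / 2)) u :=
      (Real.hasDerivAt_sin (psi κ φ u / 2)).comp u (hψ.div_const 2)
    convert hrn using 1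
    rw [key u]
    have c1 := (hcoshalf_pos u).ne'
    have c2 := (hsq_pos u).ne'
    field_simp
    have c3 : Real.sqrt (1 - κ ^ 2 * Real.sin (φ u) ^ 2) ≠ 0 := by rw [← mul_pow]; exact c2
    rw [mul_div_assoc, div_self c3, mul_one]
  -- the first derivative function
  have step2 : deriv (rn κ φ) = fun u => κ * Real.cos (φ u) / 2 :=
    funext fun u => (step1 u).deriv
  -- second derivative
  have step3 : ∀ u : ℝ, HasDerivAt (fun v => κ * Real.cos (φ v) / 2)
      (2 * (rn κ φ u) ^ 3 - rn κ φ u) u := by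
    intro u
    have hφd := phi_hasDerivAt hκ₀ hκ₁ hφ₂ u
    have hcos : HasDerivAt (fun v => κ * Real.cos (φ v) / 2)
        (κ * (-Real.sin (φ u) * (gg κ (φ u))⁻¹) / 2) u :=
      (((Real.hasDerivAt_cos (φ u)).comp u hφd).const_mul κ).div_const 2
    convert hcos using 1
    have hsψ : Real.sin (psi κ φ u) = κ * Real.sin (φ u) := by
      unfold psi
      exact Real.sin_arcsin (by linarith [abs_lt.1 (habs u)]) (by linarith [abs_lt.1 (habs u)])
    have hs2 : κ * Real.sin (φ u) = 2 * rn κ φ u * Real.cos (psi κ φ u / 2) := by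
      rw [← hsψ, show psi κ φ u = 2 * (psi κ φ u / 2) by ring]
      rw [Real.sin_two_mul]
      unfold rn
      ring_nf
    have hcψ : Real.sqrt (1 - (κ * Real.sin (φ u))^2) = 1 - 2 * (rn κ φ u)^2 := by
      have hc : Real.cos (psi κ φ u) = Real.sqrt (1 - (κ * Real.sin (φ u))^2) :=
        Real.cos_arcsin _
      rw [← hc, show psi κ φ u = 2 * (psi κ φ u / 2) by ring, Real.cos_two_mul']
      have hpy := Real.sin_sq_add_cos_sq (psi κ φ u / 2)
      unfold rn
      ring_nf
      ring_nf at hpy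
      linarith
    rw [key u, hcψ]
    have c1 := (hcoshalf_pos u).ne'
    have c2 : (1:ℝ) - 2*(rn κ φ u)^2 ≠ 0 := by
      rw [← hcψ]
      exact (hsq_pos u).ne'
    field_simp
    linear_combination (1 - 2*(rn κ φ u)^2) * hs2
  refine ⟨fun u => (step1 u).differentiableAt, ?_, ?_⟩
  · rw [step2]
    exact fun u => (step3 u).differentiableAt
  · intro u
    rw [step2]
    exact (step3 u).deriv
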